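/- Suppose A = {Ā(i,j) : 1 ≤ i ≤ k, 1 ≤ j ≤ km} is a collection of closed annuli Ā(i,j) = Ā_{p_i}(s_{ij}, r_{ij}) in a metric space, centered at points p₁,…,p_k, with radii satisfying r_{ij} > s_{ij} > 3 r_{i(j+1)} > 3 s_{i(j+1)} for all i and all 1 ≤ j ≤ km−1. Then there exists a subcollection C ⊆ A of pairwise disjoint annuli such that for each i = 1,…,k exactly m of the annuli centered at p_i belong to C. -/

import Mathlib

/-- The closed annulus `Ā_p(s, r) = {x : s ≤ d(p,x) ≤ r}` in a metric space. -/
def closedAnnulus {M : Type*} [MetricSpace M] (p : M) (s r : ℝ) : Set M :=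
  {x | s ≤ dist p x ∧ dist p x ≤ r}

open Finset

section PittsAux

variable {M : Type*} [MetricSpace M] {k m : ℕ} (p : Fin k → M)
  (s r : Fin k → Fin (k * m) → ℝ)

/-- The annulus associated to an index pair. -/
def Ann (a : Fin k × Fin (k * m)) : Set M :=
  closedAnnulus (p a.1) (s a.1 a.2) (r a.1 a.2)

/-- Number of chosen annuli at center `i`. -/
def cnt (C : Finset (Fin k × Fin (k * m))) (i : Fin k) : ℕ :=
  (C.filter fun a => a.1 = i).card

/-- `a` is blocked by the chosen set `C`: some already-chosen annulus at another
center, with smaller or equal outer radius, meets it. -/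
def Blk (C : Finset (Fin k × Fin (k * m))) (a : Fin k × Fin (k * m)) : Prop :=
  ∃ b ∈ C, b.1 ≠ a.1 ∧ r b.1 b.2 ≤ r a.1 a.2 ∧ (Ann p s r b ∩ Ann p s r a) ≠ ∅

open scoped Classical in
/-- Number of still-available (unblocked) annuli at center `i` in the remaining pool `T`. -/
noncomputable def Upot (i : Fin k) (T C : Finset (Fin k × Fin (k * m))) : ℕ :=
  (T.filter fun a => a.1 = i ∧ ¬ Blk p s r C a).card

variable (hpos : ∀ i j, 0 < s i j) (hsr : ∀ i j, s i j < r i j)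
  (hnest : ∀ i : Fin k, ∀ j j' : Fin (k * m), (j : ℕ) + 1 = (j' : ℕ) →
    3 * r i j' < s i j)

include hpos hsr hnest

lemma radii_mono_aux : ∀ (n : ℕ) (i : Fin k) (j j' : Fin (k * m)),
    (j : ℕ) + n + 1 = (j' : ℕ) → 3 * r i j' < s i j := by
  intro n
  induction n with
  | zero => intro i j j' h; exact hnest i j j' (by omega)
  | succ n ih =>
    intro i j j' h
    have hlt : (j : ℕ) + n + 1 < k * m := by have := j'.isLt; omega
    set j'' : Fin (k * m) := ⟨(j : ℕ) + n + 1, hlt⟩ with hj''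
    have h1 : 3 * r i j'' < s i j := ih i j j'' rfl
    have h2 : 3 * r i j' < s i j'' := hnest i j'' j' (by simp [hj'']; omega)
    have h3 := hsr i j''
    have h4 := hpos i j''
    linarith

lemma radii_mono (i : Fin k) (j j' : Fin (k * m)) (h : (j : ℕ) < (j' : ℕ)) :
    3 * r i j' < s i j := by
  exact radii_mono_aux s r hpos hsr hnest ((j' : ℕ) - (j : ℕ) - 1) i j j' (by omega)

/-- Two distinct concentric annuli are disjoint (pointwise form). -/
lemma conc_mem (i : Fin k) (j j' : Fin (k * m)) (hjj : (j : ℕ) < (j' : ℕ)) (x : M)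
    (hx : x ∈ closedAnnulus (p i) (s i j) (r i j))
    (hx' : x ∈ closedAnnulus (p i) (s i j') (r i j')) : False := by
  obtain ⟨h1, h2⟩ := hx
  obtain ⟨h1', h2'⟩ := hx'
  have hm := radii_mono s r hpos hsr hnest i j j' hjj
  have := hpos i j'
  have := hsr i j'
  linarith

/-- Two distinct annuli at the same center are disjoint. -/
lemma same_center (a b : Fin k × Fin (k * m)) (h1 : a.1 = b.1) (h2 : a ≠ b) :
    Ann p s r a ∩ Ann p s r b = ∅ := by
  have h2' : (a.2 : ℕ) ≠ (b.2 : ℕ) := by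
    intro h
    exact h2 (Prod.ext h1 (Fin.val_injective h))
  rw [Set.eq_empty_iff_forall_notMem]
  rintro x ⟨hxa, hxb⟩
  simp only [Ann] at hxa hxb
  rw [h1] at hxa
  rcases lt_or_gt_of_ne h2' with h | h
  · exact conc_mem p s r hpos hsr hnest b.1 a.2 b.2 h x hxa hxb
  · exact conc_mem p s r hpos hsr hnest b.1 b.2 a.2 h x hxb hxa

/-- Key blocking lemma: an annulus `B` around `q` with outer radius `rB ≤ r i j2`
cannot meet two distinct annuli (levels `j1 < j2`) around `p i`. -/
lemma blocking (i : Fin k) (j1 j2 : Fin (k * m)) (hj : (j1 : ℕ) < (j2 : ℕ))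
    (q : M) (sB rB : ℝ) (hrB : rB ≤ r i j2) (x1 x2 : M)
    (h11 : x1 ∈ closedAnnulus (p i) (s i j1) (r i j1))
    (h1B : x1 ∈ closedAnnulus q sB rB)
    (h21 : x2 ∈ closedAnnulus (p i) (s i j2) (r i j2))
    (h2B : x2 ∈ closedAnnulus q sB rB) : False := by
  have hm := radii_mono s r hpos hsr hnest i j1 j2 hj
  have hd : dist (p i) q ≤ r i j2 + rB := by
    have t := dist_triangle (p i) x2 q
    have hc : dist x2 q = dist q x2 := dist_comm _ _
    have := h21.2
    have := h2B.2
    linarith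
  have hs : s i j1 ≤ dist (p i) q + rB := by
    have t := dist_triangle (p i) q x1
    have := h11.1
    have := h1B.2
    linarith
  linarith

/-- The potential drops by at most one when an annulus `a` is taken from the pool
and inserted into the chosen set. -/
lemma Ustep (i : Fin k) (T C : Finset (Fin k × Fin (k * m))) (a : Fin k × Fin (k * m))
    (haT : a ∈ T) :
    Upot p s r i T C ≤ Upot p s r i (T.erase a) (insert a C) + 1 := by
  classical
  set S := T.filter fun x => x.1 = i ∧ ¬ Blk p s r C x with hSdef
  set S' := (T.erase a).filter fun x => x.1 = i ∧ ¬ Blk p s r (insert a C) x with hS'def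
  have hsub : S' ⊆ S := by
    intro x hx
    simp only [hSdef, hS'def, mem_filter, mem_erase] at *
    refine ⟨hx.1.2, hx.2.1, fun hb => hx.2.2 ?_⟩
    obtain ⟨b, hbC, hrest⟩ := hb
    exact ⟨b, mem_insert_of_mem hbC, hrest⟩
  -- every element of `S \ S'` is either `a` itself or "newly blocked by `a`"
  have hnew : ∀ x ∈ S \ S', x = a ∨
      (x.1 = i ∧ a.1 ≠ x.1 ∧ r a.1 a.2 ≤ r x.1 x.2 ∧ (Ann p s r a ∩ Ann p s r x) ≠ ∅) := by
    intro x hx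
    rw [mem_sdiff] at hx
    obtain ⟨hxS, hxS'⟩ := hx
    simp only [hSdef, mem_filter] at hxS
    obtain ⟨hxT, hxi, hxB⟩ := hxS
    by_cases hxa : x = a
    · exact Or.inl hxa
    · right
      refine ⟨hxi, ?_⟩
      simp only [hS'def, mem_filter, mem_erase, not_and, not_not] at hxS'
      have hblk : Blk p s r (insert a C) x := hxS' ⟨hxa, hxT⟩ hxi
      obtain ⟨b, hbC, hb1, hb2, hb3⟩ := hblk
      rcases mem_insert.mp hbC with rfl | hbC'
      · exact ⟨hb1, hb2, hb3⟩
      · exact absurd ⟨b, hbC', hb1, hb2, hb3⟩ hxB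
  have hone : (S \ S').card ≤ 1 := by
    rw [Finset.card_le_one]
    intro x hx y hy
    rcases hnew x hx with rfl | ⟨hxi, hax, hrx, hnx⟩
    · rcases hnew y hy with rfl | ⟨hyi, hay, hry, hny⟩
      · rfl
      · -- x = a, and a blocks y with a.1 ≠ y.1; but a ∈ S means a.1 = i = y.1
        have haS := (mem_sdiff.mp hx).1
        simp only [hSdef, mem_filter] at haS
        exact absurd (haS.2.1.trans hyi.symm) hay
    · rcases hnew y hy with rfl | ⟨hyi, hay, hry, hny⟩
      · have haS := (mem_sdiff.mp hy).1
        simp only [hSdef, mem_filter] at haS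
        exact absurd (haS.2.1.trans hxi.symm) hax
      · -- both newly blocked by a: impossible for two distinct ones
        by_contra hne
        have hval : (x.2 : ℕ) ≠ (y.2 : ℕ) := by
          intro h
          exact hne (Prod.ext (hxi.trans hyi.symm) (Fin.val_injective h))
        obtain ⟨x1, hx1a, hx1x⟩ := Set.nonempty_iff_ne_empty.mpr hnx
        obtain ⟨y1, hy1a, hy1y⟩ := Set.nonempty_iff_ne_empty.mpr hny
        simp only [Ann] at hx1a hx1x hy1a hy1y
        rw [hxi] at hx1x hrx
        rw [hyi] at hy1y hry
        rcases lt_or_gt_of_ne hval with h | h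
        · exact blocking p s r hpos hsr hnest i x.2 y.2 h (p a.1) (s a.1 a.2) (r a.1 a.2)
            hry x1 y1 hx1x hx1a hy1y hy1a
        · exact blocking p s r hpos hsr hnest i y.2 x.2 h (p a.1) (s a.1 a.2) (r a.1 a.2)
            hrx y1 x1 hy1y hy1a hx1x hx1a
  have hcard : (S \ S').card + S'.card = S.card := Finset.card_sdiff_add_card_eq_card hsub
  have : S.card ≤ S'.card + 1 := by omega
  simpa [Upot, hSdef, hS'def] using this

open scoped Classical in
lemma greedy :
    ∀ (T C : Finset (Fin k × Fin (k * m))),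
      (∀ b ∈ C, ∀ x ∈ T, r b.1 b.2 ≤ r x.1 x.2) →
      (∀ b ∈ C, b ∉ T) →
      (∀ j, cnt C j ≤ m) →
      (∀ a ∈ C, ∀ b ∈ C, a ≠ b → Ann p s r a ∩ Ann p s r b = ∅) →
      ∃ C', (∀ j, cnt C' j ≤ m) ∧
        (∀ a ∈ C', ∀ b ∈ C', a ≠ b → Ann p s r a ∩ Ann p s r b = ∅) ∧
        ∀ i, cnt C i ≤ cnt C' i ∧
          min (m : ℤ) ((Upot p s r i T C : ℤ) + C.card - ((k : ℤ) - 1) * m)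
            ≤ cnt C' i := by
  intro T
  induction T using Finset.strongInduction with
  | _ T ih =>
  intro C hsort hCT hcap hpair
  rcases T.eq_empty_or_nonempty with rfl | hT
  · refine ⟨C, hcap, hpair, fun i => ⟨le_refl _, ?_⟩⟩
    have hU : Upot p s r i ∅ C = 0 := by simp [Upot]
    have hk1 : 1 ≤ k := i.pos
    have hcard : C.card = ∑ j : Fin k, cnt C j :=
      Finset.card_eq_sum_card_fiberwise (fun a _ => mem_univ a.1)
    have hsplit : ∑ j ∈ (univ : Finset (Fin k)).erase i, cnt C j + cnt C i
        = ∑ j : Fin k, cnt C j := Finset.sum_erase_add _ _ (mem_univ i)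
    have hbound : ∑ j ∈ (univ : Finset (Fin k)).erase i, cnt C j ≤ (k - 1) * m := by
      calc ∑ j ∈ (univ : Finset (Fin k)).erase i, cnt C j
          ≤ ((univ : Finset (Fin k)).erase i).card • m :=
            Finset.sum_le_card_nsmul _ _ _ (fun x _ => hcap x)
        _ = (k - 1) * m := by
            rw [Finset.card_erase_of_mem (mem_univ i), card_univ, Fintype.card_fin,
              smul_eq_mul]
    have hCle : C.card ≤ cnt C i + (k - 1) * m := by omega
    have : (C.card : ℤ) - ((k : ℤ) - 1) * m ≤ cnt C i := by
      have := (Nat.cast_le (α := ℤ)).mpr hCle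
      push_cast at this
      have hk1' : ((k - 1 : ℕ) : ℤ) = (k : ℤ) - 1 := by
        push_cast [Nat.cast_sub hk1]; ring
      rw [hk1'] at this
      linarith
    rw [hU]
    exact le_trans (min_le_right _ _) (by push_cast; linarith)
  · obtain ⟨a, haT, hamin⟩ := T.exists_min_image (fun x => r x.1 x.2) hT
    have haC : a ∉ C := fun h => hCT a h haT
    have hcnt_ins : ∀ j, cnt (insert a C) j ≤ cnt C j + 1 := by
      intro j
      unfold cnt
      rw [filter_insert]
      split
      · exact card_insert_le _ _
      · omega
    have hcnt_mono : ∀ j, cnt C j ≤ cnt (insert a C) j := fun j =>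
      card_le_card (filter_subset_filter _ (subset_insert _ _))
    by_cases hok : cnt C a.1 < m ∧ ∀ b ∈ C, b.1 ≠ a.1 → Ann p s r b ∩ Ann p s r a = ∅
    · -- accept a
      have hcnt_ins_eq : ∀ j, j ≠ a.1 → cnt (insert a C) j = cnt C j := by
        intro j hj
        unfold cnt
        rw [filter_insert]
        split
        · exact absurd (by assumption) (by simpa [eq_comm] using hj)
        · rfl
      have hcap1 : ∀ j, cnt (insert a C) j ≤ m := by
        intro j
        by_cases hj : j = a.1
        · subst hj
          have h1 := hcnt_ins a.1
          have h2 := hok.1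
          omega
        · rw [hcnt_ins_eq j hj]; exact hcap j
      have hsort1 : ∀ b ∈ insert a C, ∀ x ∈ T.erase a, r b.1 b.2 ≤ r x.1 x.2 := by
        intro b hb x hx
        rcases mem_insert.mp hb with rfl | hb'
        · exact hamin x (mem_of_mem_erase hx)
        · exact hsort b hb' x (mem_of_mem_erase hx)
      have hCT1 : ∀ b ∈ insert a C, b ∉ T.erase a := by
        intro b hb
        rcases mem_insert.mp hb with rfl | hb'
        · exact notMem_erase _ _
        · exact fun h => hCT b hb' (mem_of_mem_erase h)
      have hpair1 : ∀ x ∈ insert a C, ∀ y ∈ insert a C, x ≠ y →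
          Ann p s r x ∩ Ann p s r y = ∅ := by
        have key : ∀ y ∈ C, y ≠ a → Ann p s r a ∩ Ann p s r y = ∅ := by
          intro y hy hya
          by_cases hy1 : y.1 = a.1
          · exact same_center p s r hpos hsr hnest a y hy1.symm (Ne.symm hya)
          · rw [Set.inter_comm]; exact hok.2 y hy hy1
        intro x hx y hy hxy
        rcases mem_insert.mp hx with rfl | hx'
        · rcases mem_insert.mp hy with rfl | hy'
          · exact absurd rfl hxy
          · exact key y hy' (fun h => hxy h.symm)
        · rcases mem_insert.mp hy with rfl | hy'
          · rw [Set.inter_comm]; exact key x hx' hxy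
          · exact hpair x hx' y hy' hxy
      obtain ⟨C', h1, h2, h3⟩ := ih (T.erase a) (erase_ssubset haT) (insert a C)
        hsort1 hCT1 hcap1 hpair1
      refine ⟨C', h1, h2, fun i => ⟨le_trans (hcnt_mono i) (h3 i).1, ?_⟩⟩
      by_cases him : m ≤ cnt C i
      · calc min (m : ℤ) _ ≤ (m : ℤ) := min_le_left _ _
          _ ≤ cnt C i := by exact_mod_cast him
          _ ≤ cnt C' i := by exact_mod_cast le_trans (hcnt_mono i) (h3 i).1
      · refine le_trans ?_ (h3 i).2
        have hU := Ustep p s r hpos hsr hnest i T C a haT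
        have hcardins : (insert a C).card = C.card + 1 := card_insert_of_notMem haC
        apply min_le_min (le_refl _)
        rw [hcardins]
        push_cast
        have : (Upot p s r i T C : ℤ) ≤ (Upot p s r i (T.erase a) (insert a C) : ℤ) + 1 := by
          exact_mod_cast hU
        linarith
    · -- reject a
      have hsort1 : ∀ b ∈ C, ∀ x ∈ T.erase a, r b.1 b.2 ≤ r x.1 x.2 :=
        fun b hb x hx => hsort b hb x (mem_of_mem_erase hx)
      have hCT1 : ∀ b ∈ C, b ∉ T.erase a :=
        fun b hb h => hCT b hb (mem_of_mem_erase h)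
      obtain ⟨C', h1, h2, h3⟩ := ih (T.erase a) (erase_ssubset haT) C
        hsort1 hCT1 hcap hpair
      refine ⟨C', h1, h2, fun i => ⟨(h3 i).1, ?_⟩⟩
      by_cases him : m ≤ cnt C i
      · calc min (m : ℤ) _ ≤ (m : ℤ) := min_le_left _ _
          _ ≤ cnt C i := by exact_mod_cast him
          _ ≤ cnt C' i := by exact_mod_cast (h3 i).1
      · refine le_trans ?_ (h3 i).2
        have hUeq : Upot p s r i (T.erase a) C = Upot p s r i T C := by
          have hnota : ¬ (a.1 = i ∧ ¬ Blk p s r C a) := by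
            rintro ⟨ha1, ha2⟩
            apply hok
            constructor
            · rw [ha1]; omega
            · intro b hb hb1
              by_contra hne
              exact ha2 ⟨b, hb, hb1, hsort b hb a haT, hne⟩
          unfold Upot
          classical
          rw [Finset.filter_erase, Finset.erase_eq_of_notMem]
          simp only [mem_filter]
          tauto
        rw [hUeq]

end PittsAux


/-- Pitts' combinatorial annuli lemma: given, for each of `k` centers `p i`, a family of
`k*m` nested concentric closed annuli `Ā_{p i}(s i j, r i j)` whose radii satisfy
`r_{ij} > s_{ij} > 3 r_{i(j+1)} > 3 s_{i(j+1)}`, there is a subcollection of pairwise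
disjoint annuli containing exactly `m` annuli around each center. -/
theorem stmt_3 {M : Type*} [MetricSpace M] (k m : ℕ) (p : Fin k → M)
    (s r : Fin k → Fin (k * m) → ℝ)
    (hpos : ∀ i j, 0 < s i j)
    (hsr : ∀ i j, s i j < r i j)
    (hnest : ∀ i : Fin k, ∀ j j' : Fin (k * m), (j : ℕ) + 1 = (j' : ℕ) →
      3 * r i j' < s i j) :
    ∃ C : Finset (Fin k × Fin (k * m)),
      (∀ i : Fin k, (C.filter fun a => a.1 = i).card = m) ∧
      ∀ a ∈ C, ∀ b ∈ C, a ≠ b →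
        closedAnnulus (p a.1) (s a.1 a.2) (r a.1 a.2) ∩
          closedAnnulus (p b.1) (s b.1 b.2) (r b.1 b.2) = ∅ := by
  classical
  obtain ⟨C', hcap, hpair, hmin⟩ := greedy p s r hpos hsr hnest univ ∅
    (by simp) (by simp) (by simp [cnt]) (by simp)
  refine ⟨C', fun i => ?_, fun a ha b hb hab => hpair a ha b hb hab⟩
  have hfib : ((univ : Finset (Fin k × Fin (k * m))).filter fun a => a.1 = i).card
      = k * m := by
    have hmapeq : ((univ : Finset (Fin k × Fin (k * m))).filter fun a => a.1 = i)
        = univ.map ⟨fun j => ((i, j) : Fin k × Fin (k * m)),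
            fun x y h => by simpa [Prod.ext_iff] using h⟩ := by
      ext x
      simp [Prod.ext_iff, eq_comm]
      exact ⟨fun h => ⟨x.2, h.symm, rfl⟩, fun ⟨_, h, _⟩ => h.symm⟩
    rw [hmapeq, Finset.card_map, card_univ, Fintype.card_fin]
  have hU : Upot p s r i univ ∅ = k * m := by
    unfold Upot
    rw [Finset.filter_congr (fun x (_ : x ∈ univ) => by simp [Blk] :
      ∀ x ∈ (univ : Finset (Fin k × Fin (k * m))),
        (x.1 = i ∧ ¬ Blk p s r ∅ x) ↔ x.1 = i)]
    exact hfib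
  have hm : (m : ℤ) ≤ cnt C' i := by
    have h := (hmin i).2
    rw [hU] at h
    have heq : ((k * m : ℕ) : ℤ) + (∅ : Finset (Fin k × Fin (k * m))).card
        - ((k : ℤ) - 1) * m = m := by simp only [Finset.card_empty]; push_cast; ring
    rw [heq, min_self] at h
    exact h
  have hle : cnt C' i ≤ m := hcap i
  have : cnt C' i = m := by omega
  exact this
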